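/- arXiv:1010.5032 — 2 statements merged into one kernel-verified Lean document; each statement's English description precedes it below -/
import Mathlib

section
/- Let r = u^λ(p) where p = (0, x¹) with x¹ ∈ (-1,1), and u^λ is the conformal isotropy flow of the diamond with tips p₀ = (-1,𝟎), q₀ = (1,𝟎) in ℝ^{1,1}, acting on null coordinates x^± = t ± x by x^± ↦ ((1+x^±) - e^{-λ}(1-x^±))/((1+x^±) + e^{-λ}(1-x^±)). Then (1 + t(r))² - x(r)² = e^{2λ} · ((1 - t(r))² - x(r)²), where t(r), x(r) are the Cartesian coordinates of r. Consequently λ = (1/2) log( d_η(p₀,r)² / d_η(r,q₀)² ). -/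
/-- Action of the conformal isotropy flow on one null coordinate. -/
noncomputable def nullFlow (l s : ℝ) : ℝ :=
  ((1 + s) - Real.exp (-l) * (1 - s)) / ((1 + s) + Real.exp (-l) * (1 - s))

/-- The conformal isotropy flow `u^λ` of the standard diamond in `ℝ^{1,1}`. -/
noncomputable def uFlow (l : ℝ) (p : ℝ × ℝ) : ℝ × ℝ :=
  ((nullFlow l (p.1 + p.2) + nullFlow l (p.1 - p.2)) / 2,
   (nullFlow l (p.1 + p.2) - nullFlow l (p.1 - p.2)) / 2)

lemma one_add_nullFlow (l s : ℝ) (hD : (1 + s) + Real.exp (-l) * (1 - s) ≠ 0) :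
    1 + nullFlow l s = 2 * (1 + s) / ((1 + s) + Real.exp (-l) * (1 - s)) := by
  rw [nullFlow]; field_simp; ring

lemma one_sub_nullFlow (l s : ℝ) (hD : (1 + s) + Real.exp (-l) * (1 - s) ≠ 0) :
    1 - nullFlow l s = 2 * Real.exp (-l) * (1 - s) / ((1 + s) + Real.exp (-l) * (1 - s)) := by
  rw [nullFlow]; field_simp; ring

/-- for `r = u^λ((0, x¹))` with `x¹ ∈ (-1,1)` one has
`(1 + t(r))² - x(r)² = e^{2λ}((1 - t(r))² - x(r)²)`, and consequently
`λ = ½ log(d_η(p₀,r)² / d_η(r,q₀)²)`. -/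
theorem stmt_4 (x1 : ℝ) (hx1 : x1 ∈ Set.Ioo (-1 : ℝ) 1) (l : ℝ) :
    (1 + (uFlow l (0, x1)).1) ^ 2 - (uFlow l (0, x1)).2 ^ 2 =
      Real.exp (2 * l) *
        ((1 - (uFlow l (0, x1)).1) ^ 2 - (uFlow l (0, x1)).2 ^ 2) ∧
    l = (1 / 2) * Real.log
        (((1 + (uFlow l (0, x1)).1) ^ 2 - (uFlow l (0, x1)).2 ^ 2) /
         ((1 - (uFlow l (0, x1)).1) ^ 2 - (uFlow l (0, x1)).2 ^ 2)) := by
  obtain ⟨h1, h2⟩ := hx1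
  set E := Real.exp (-l) with hEdef
  have hE : E > 0 := Real.exp_pos _
  have hDa : (1 + (0 + x1)) + E * (1 - (0 + x1)) > 0 := by nlinarith
  have hDb : (1 + (0 - x1)) + E * (1 - (0 - x1)) > 0 := by nlinarith
  have hfac1 : (1 + (uFlow l (0, x1)).1) ^ 2 - (uFlow l (0, x1)).2 ^ 2 =
      (1 + nullFlow l (0 + x1)) * (1 + nullFlow l (0 - x1)) := by
    simp only [uFlow]; ring
  have hfac2 : (1 - (uFlow l (0, x1)).1) ^ 2 - (uFlow l (0, x1)).2 ^ 2 =
      (1 - nullFlow l (0 + x1)) * (1 - nullFlow l (0 - x1)) := by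
    simp only [uFlow]; ring
  have hexp2 : Real.exp (2 * l) * E ^ 2 = 1 := by
    rw [hEdef, ← Real.exp_nat_mul, ← Real.exp_add]; norm_num
  have key : (1 + (uFlow l (0, x1)).1) ^ 2 - (uFlow l (0, x1)).2 ^ 2 =
      Real.exp (2 * l) *
        ((1 - (uFlow l (0, x1)).1) ^ 2 - (uFlow l (0, x1)).2 ^ 2) := by
    rw [hfac1, hfac2, one_add_nullFlow l _ hDa.ne', one_add_nullFlow l _ hDb.ne',
      one_sub_nullFlow l _ hDa.ne', one_sub_nullFlow l _ hDb.ne']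
    rw [div_mul_div_comm, div_mul_div_comm, ← mul_div_assoc]
    congr 1
    have h : Real.exp (2 * l) * Real.exp (-l) * Real.exp (-l) = 1 := by
      rw [← Real.exp_add, ← Real.exp_add]; rw [show 2 * l + -l + -l = 0 by ring, Real.exp_zero]
    linear_combination (-4 * (1 - x1) * (1 + x1)) * h
  refine ⟨key, ?_⟩
  have hQ : (1 - (uFlow l (0, x1)).1) ^ 2 - (uFlow l (0, x1)).2 ^ 2 > 0 := by
    rw [hfac2, one_sub_nullFlow l _ hDa.ne', one_sub_nullFlow l _ hDb.ne']
    have : (1 : ℝ) - (0 + x1) > 0 := by linarith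
    have : (1 : ℝ) - (0 - x1) > 0 := by linarith
    positivity
  rw [key, mul_div_assoc, div_self (ne_of_gt hQ), mul_one, Real.log_exp]
  ring
end

section
/- Let d : X × X → ℝ≥0 satisfy the reverse triangle inequality on a partially ordered set: d(a,c) ≥ d(a,b) + d(b,c) for a ≤ b ≤ c. Fix p ≤ r_λ ≤ r' ≤ q and p ≤ r ≤ r' with r ≤ q, and suppose: (a1) d(p,r_λ) + d(r_λ,r') = d(p,r'); (a2) d(r_λ,r') + d(r',q) = d(r_λ,q); (b1) d(p,r) = e^λ · d(r,q); (b2) d(p,r_λ) = e^λ · d(r_λ,q). Then d(r_λ, r') ≥ d(r, r'). -/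
/-- key step of Proposition 3.5 -- if `r` and `r_λ` lie on the
same level set of `λ(·) = log (d p · / d · q)` and the geodesic through
`r_λ, r'` is maximal, then `d r_λ r' ≥ d r r'`. -/
theorem stmt_7 {X : Type*} [PartialOrder X] (d : X → X → ℝ)
    (hnonneg : ∀ a b, 0 ≤ d a b)
    (hrev : ∀ a b c : X, a ≤ b → b ≤ c → d a b + d b c ≤ d a c)
    (p rl r r' q : X) (l : ℝ)
    (hprl : p ≤ rl) (hrlr' : rl ≤ r') (hr'q : r' ≤ q)
    (hpr : p ≤ r) (hrr' : r ≤ r') (hrq : r ≤ q)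
    (hdrlq : 0 < d rl q) (hdrq : 0 < d r q)
    (ha1 : d p rl + d rl r' = d p r')
    (ha2 : d rl r' + d r' q = d rl q)
    (hb1 : d p r = Real.exp l * d r q)
    (hb2 : d p rl = Real.exp l * d rl q) :
    d r r' ≤ d rl r' := by
  have h1 := hrev p r r' hpr hrr'
  have h2 := hrev r r' q hrr' hr'q
  have he := Real.exp_pos l
  nlinarith [he.le, hnonneg r r', hnonneg rl r']
end
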